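/- In Γ^p, for pairwise distinct i, j, k ∈ ℤ/pℤ and any integer e, the identity [σᵢ^{(j−k)e}·σⱼ^{(k−i)e}, σ_k^{(i−j)e}·σᵢ^{(j−k)e}] = σ_{i,(j−i)(i−k)e}^{−2(j−k)e}·σᵢ^{2(j−k)e} holds, where all exponents and the second index of σ_{i,·} are read modulo p. -/
import Mathlib


/-- The commutator `[g, h] = g⁻¹ h⁻¹ g h`. -/
def pbra {G : Type*} [Group G] (g h : G) : G := g⁻¹ * h⁻¹ * g * h

/-- The relators `α^p, τ^p` of `Γ = ⟨α, τ ∣ α^p, τ^p⟩`. -/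
def CpCpRels (p : ℕ) : Set (FreeGroup (Fin 2)) :=
  {FreeGroup.of 0 ^ p, FreeGroup.of 1 ^ p}

/-- `Γ = ⟨α, τ ∣ α^p, τ^p⟩`, the free product of two cyclic groups of order `p`. -/
def Gam (p : ℕ) : Type := PresentedGroup (CpCpRels p)

instance (p : ℕ) : Group (Gam p) := by unfold Gam; infer_instance

/-- The generator `α` of `Γ`. -/
def αΓ (p : ℕ) : Gam p := PresentedGroup.of 0

/-- The generator `τ` of `Γ`. -/
def τΓ (p : ℕ) : Gam p := PresentedGroup.of 1

/-- `αᵢ ∈ Γ^p`: the element whose `i`-th coordinate is `α`, others trivial. -/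
def αt (p : ℕ) (i : ZMod p) : ZMod p → Gam p := Pi.mulSingle i (αΓ p)

/-- `τᵢ ∈ Γ^p`: the element whose `i`-th coordinate is `τ`, others trivial. -/
def τt (p : ℕ) (i : ZMod p) : ZMod p → Gam p := Pi.mulSingle i (τΓ p)

/-- `σᵢ = τᵢ·α_{i+1}·α_{i+2}²···α_{i+k}^k···α_{i-1}^{p-1} ∈ Γ^p`
(indices mod `p`): the element of `Γ^p` whose `i`-th coordinate is `τ` and
whose `(i+k)`-th coordinate is `α^k` for `1 ≤ k ≤ p-1`. -/
def σg (p : ℕ) (i : ZMod p) : ZMod p → Gam p :=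
  fun x => if x = i then τΓ p else αΓ p ^ (x - i).val

/-- `σ_{i,n} = σᵢ^{αᵢⁿ} = αᵢ⁻ⁿ·σᵢ·αᵢⁿ ∈ Γ^p`, with the exponent `n` read
modulo `p`. -/
def σgn (p : ℕ) (i n : ZMod p) : ZMod p → Gam p :=
  (αt p i ^ n.val)⁻¹ * σg p i * αt p i ^ n.val

lemma αΓ_pow_p (p : ℕ) : αΓ p ^ p = 1 := by
  have h : (FreeGroup.of 0 ^ p : FreeGroup (Fin 2)) ∈ Subgroup.normalClosure (CpCpRels p) :=
    Subgroup.subset_normalClosure (Set.mem_insert _ _)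
  show (PresentedGroup.of (rels := CpCpRels p) 0 : PresentedGroup (CpCpRels p)) ^ p = 1
  rw [PresentedGroup.of, ← map_pow]
  exact (QuotientGroup.eq_one_iff _).mpr h

lemma τΓ_pow_p (p : ℕ) : τΓ p ^ p = 1 := by
  have h : (FreeGroup.of 1 ^ p : FreeGroup (Fin 2)) ∈ Subgroup.normalClosure (CpCpRels p) :=
    Subgroup.subset_normalClosure (Set.mem_insert_of_mem _ rfl)
  show (PresentedGroup.of (rels := CpCpRels p) 1 : PresentedGroup (CpCpRels p)) ^ p = 1
  rw [PresentedGroup.of, ← map_pow]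
  exact (QuotientGroup.eq_one_iff _).mpr h

section
variable {G : Type*} [Group G] {p : ℕ} [NeZero p] {g : G} (h : g ^ p = 1)
include h

lemma pow_zval_add (x y : ZMod p) : g ^ (x + y).val = g ^ x.val * g ^ y.val := by
  rw [← pow_add, ZMod.val_add, ← pow_eq_pow_mod _ h]

lemma pow_zval_mul (x y : ZMod p) : g ^ (x * y).val = (g ^ x.val) ^ y.val := by
  rw [← pow_mul, ZMod.val_mul, ← pow_eq_pow_mod _ h]

lemma pow_zval_neg (x : ZMod p) : g ^ (-x).val = (g ^ x.val)⁻¹ := by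
  rw [eq_inv_iff_mul_eq_one, ← pow_zval_add h, neg_add_cancel, ZMod.val_zero, pow_zero]
end

lemma pbra_pow {G : Type*} [Group G] (g : G) (m n : ℕ) : pbra (g ^ m) (g ^ n) = 1 := by
  unfold pbra; group

lemma pbra_one_left {G : Type*} [Group G] (g : G) : pbra 1 g = 1 := by
  unfold pbra; group

lemma pbra_one_right {G : Type*} [Group G] (g : G) : pbra g 1 = 1 := by
  unfold pbra; group

/-- In `Γ^p`, for pairwise distinct `i, j, k ∈ ℤ/pℤ` and
any integer `e`, one has
`[σᵢ^{(j−k)e}·σⱼ^{(k−i)e}, σ_k^{(i−j)e}·σᵢ^{(j−k)e}]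
  = σ_{i,(j−i)(i−k)e}^{−2(j−k)e}·σᵢ^{2(j−k)e}`,
all exponents and the second index of `σ_{i,·}` being read modulo `p`. -/
theorem guptaSidki_commutator_identity
    (p : ℕ) (hp : p.Prime) (ho : Odd p)
    (i j k : ZMod p) (hij : i ≠ j) (hik : i ≠ k) (hjk : j ≠ k) (e : ℤ) :
    pbra (σg p i ^ ((j - k) * (e : ZMod p)).val *
        σg p j ^ ((k - i) * (e : ZMod p)).val)
      (σg p k ^ ((i - j) * (e : ZMod p)).val *
        σg p i ^ ((j - k) * (e : ZMod p)).val) =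
    σgn p i ((j - i) * (i - k) * (e : ZMod p)) ^
        (-(2 * (j - k) * (e : ZMod p))).val *
      σg p i ^ (2 * (j - k) * (e : ZMod p)).val := by
  haveI : NeZero p := ⟨hp.pos.ne'⟩
  have hα := αΓ_pow_p p
  have hτ := τΓ_pow_p p
  set E : ZMod p := (e : ZMod p) with hE
  set A : ZMod p := (j - k) * E with hA
  set B : ZMod p := (k - i) * E with hB
  set C : ZMod p := (i - j) * E with hC
  set N : ZMod p := (j - i) * (i - k) * E with hN
  funext x
  simp only [pbra, σgn, σg, αt, Pi.mul_apply, Pi.inv_apply, Pi.pow_apply,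
    Pi.mulSingle_apply]
  have hRHS : ∀ y : ZMod p,
      (αΓ p ^ y.val) ^ (-(2 * (j - k) * E)).val *
        (αΓ p ^ y.val) ^ (2 * (j - k) * E).val = 1 := by
    intro y
    rw [← pow_zval_mul hα, ← pow_zval_mul hα, ← pow_zval_add hα,
      show y * -(2 * (j - k) * E) + y * (2 * (j - k) * E) = 0 by ring,
      ZMod.val_zero, pow_zero]
  by_cases hxi : x = i
  · subst hxi
    simp only [eq_self_iff_true, if_true, if_neg hij, if_neg hik]
    set w : Gam p := αΓ p ^ N.val with hw
    have h1 : (αΓ p ^ (x - j).val) ^ B.val = w := by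
      rw [← pow_zval_mul hα, hw, show (x - j) * B = N by rw [hB, hN]; ring]
    have h2 : (αΓ p ^ (x - k).val) ^ C.val = w⁻¹ := by
      rw [← pow_zval_mul hα, show (x - k) * C = -N by rw [hC, hN]; ring,
        pow_zval_neg hα, hw]
    rw [h1, h2]
    have hc : ∀ m : ℕ, (w⁻¹ * τΓ p * w) ^ m = w⁻¹ * τΓ p ^ m * w := by
      intro m
      induction m with
      | zero => group
      | succ n ih => rw [pow_succ, pow_succ, ih]; group
    have hcp : (w⁻¹ * τΓ p * w) ^ p = 1 := by rw [hc, hτ]; group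
    rw [pow_zval_neg hcp, show (2 * (j - k) * E) = A + A by rw [hA]; ring,
      hc, pow_zval_add hτ]
    group
  · simp only [if_neg hxi]
    by_cases hxj : x = j
    · subst hxj
      simp only [eq_self_iff_true, if_true, if_neg hxi, if_neg hjk,
        one_pow, inv_one, one_mul, mul_one]
      have h1 : (αΓ p ^ (x - k).val) ^ C.val * (αΓ p ^ (x - i).val) ^ A.val = 1 := by
        rw [← pow_zval_mul hα, ← pow_zval_mul hα, ← pow_zval_add hα,
          show (x - k) * C + (x - i) * A = 0 by rw [hA, hC]; ring,
          ZMod.val_zero, pow_zero]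
      rw [h1, show ∀ g : Gam p, g⁻¹ * 1⁻¹ * g * 1 = 1 from fun g => by group,
        hRHS]
    · by_cases hxk : x = k
      · subst hxk
        simp only [eq_self_iff_true, if_true, if_neg hxi, if_neg hxj,
          one_pow, inv_one, one_mul, mul_one]
        have h1 : (αΓ p ^ (x - i).val) ^ A.val * (αΓ p ^ (x - j).val) ^ B.val = 1 := by
          rw [← pow_zval_mul hα, ← pow_zval_mul hα, ← pow_zval_add hα,
            show (x - i) * A + (x - j) * B = 0 by rw [hA, hB]; ring,
            ZMod.val_zero, pow_zero]
        rw [h1, show ∀ g : Gam p, (1 : Gam p)⁻¹ * g⁻¹ * 1 * g = 1 from fun g => by group,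
          hRHS]
      · simp only [if_neg hxj, if_neg hxk, one_pow, inv_one, one_mul, mul_one]
        rw [← pow_zval_mul hα, ← pow_zval_mul hα, ← pow_zval_mul hα,
          ← pow_zval_add hα, ← pow_zval_add hα]
        have := pbra_pow (αΓ p) ((x - i) * A + (x - j) * B).val
          ((x - k) * C + (x - i) * A).val
        rw [pbra] at this
        rw [this, hRHS]
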